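/- arXiv:1810.10290 — 3 statements merged into one kernel-verified Lean document; each statement's English description precedes it below -/
import Mathlib

section
/- Let G be the 3×3 real matrix G = (1/12)·[[19, -12, 3], [-12, 10, -3], [3, -3, 1]]. Then G is symmetric positive definite. -/
theorem stmt_0 :
    let G : Matrix (Fin 3) (Fin 3) ℝ :=
      (1/12 : ℝ) • !![19, -12, 3; -12, 10, -3; 3, -3, 1]
    G.IsSymm ∧ G.PosDef := by
  intro G
  have hsymm : G.IsSymm := by
    ext i j
    fin_cases i <;> fin_cases j <;> simp [G, Matrix.transpose_apply]
  refine ⟨hsymm, ?_, ?_⟩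
  · rw [Matrix.IsHermitian]
    ext i j
    fin_cases i <;> fin_cases j <;> simp [G, Matrix.conjTranspose_apply]
  · intro x hx
    have hx' : x 0 ≠ 0 ∨ x 1 ≠ 0 ∨ x 2 ≠ 0 := by
      by_contra h
      push_neg at h
      apply hx
      ext i; fin_cases i <;> simp [h.1, h.2.1, h.2.2]
    simp only [Finsupp.sum_fintype, mul_zero, zero_mul, star_zero, Finset.sum_const_zero, implies_true]
    simp only [G, dotProduct, Matrix.mulVec, Fin.sum_univ_three,
      Matrix.smul_apply, Matrix.cons_val', Matrix.cons_val_zero, Matrix.cons_val_one,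
      Matrix.head_cons, Matrix.head_fin_const, Matrix.empty_val',
      Matrix.cons_val_fin_one, Matrix.cons_val_two, Matrix.tail_cons,
      RCLike.star_def, map_one, one_mul, smul_eq_mul]
    norm_num [Matrix.cons_val_zero, Matrix.cons_val_one, Matrix.head_cons, Matrix.cons_val_two, Matrix.tail_cons] 
    have key : 0 < x 0 ^ 2 + (x 1 - 3 * x 0) ^ 2 + (x 2 + 3 * x 0 - 3 * x 1) ^ 2 := by
      by_contra hle
      push_neg at hle
      have e0 : x 0 = 0 := by
        have : x 0 ^ 2 = 0 := by
          nlinarith [sq_nonneg (x 0), sq_nonneg (x 1 - 3 * x 0), sq_nonneg (x 2 + 3 * x 0 - 3 * x 1)]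
        exact pow_eq_zero_iff (by norm_num) |>.mp this
      have e1 : x 1 = 0 := by
        have : (x 1 - 3 * x 0) ^ 2 = 0 := by
          nlinarith [sq_nonneg (x 0), sq_nonneg (x 1 - 3 * x 0), sq_nonneg (x 2 + 3 * x 0 - 3 * x 1)]
        have := pow_eq_zero_iff (two_ne_zero) |>.mp this
        linarith
      have e2 : x 2 = 0 := by
        have : (x 2 + 3 * x 0 - 3 * x 1) ^ 2 = 0 := by
          nlinarith [sq_nonneg (x 0), sq_nonneg (x 1 - 3 * x 0), sq_nonneg (x 2 + 3 * x 0 - 3 * x 1)]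
        have := pow_eq_zero_iff (two_ne_zero) |>.mp this
        linarith
      exact hx (by ext i; fin_cases i <;> simp [e0, e1, e2])
    nlinarith [key]
end

section
/- Let H be a real inner product space. For any w_{n+1}, w_n, w_{n-1}, w_{n-2} ∈ H, ⟨(5/3)w_{n+1} - (5/2)w_n + w_{n-1} - (1/6)w_{n-2}, w_{n+1}⟩ = ‖W_{n+1}‖_G² - ‖W_n‖_G² + (1/12)‖w_{n+1} - 3w_n + 3w_{n-1} - w_{n-2}‖², where for a triple V = (x,y,z) ∈ H³ we set ‖V‖_G² = (1/12)(19‖x‖² + 10‖y‖² + ‖z‖² - 24⟨x,y⟩ + 6⟨x,z⟩ - 6⟨y,z⟩), W_{n+1} = (w_{n+1}, w_n, w_{n-1}) and W_n = (w_n, w_{n-1}, w_{n-2}). -/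
theorem stmt_3 {H : Type*} [NormedAddCommGroup H] [InnerProductSpace ℝ H]
    (w1 w0 wm1 wm2 : H)
    (GnormSq : H → H → H → ℝ)
    (hG : ∀ x y z : H, GnormSq x y z =
      (1/12) * (19*‖x‖^2 + 10*‖y‖^2 + ‖z‖^2
        - 24 * inner ℝ x y + 6 * inner ℝ x z - 6 * inner ℝ y z)) :
    inner ℝ ((5/3 : ℝ) • w1 - (5/2 : ℝ) • w0 + wm1 - (1/6 : ℝ) • wm2) w1 =
      GnormSq w1 w0 wm1 - GnormSq w0 wm1 wm2
        + (1/12) * ‖w1 - (3:ℝ) • w0 + (3:ℝ) • wm1 - wm2‖^2 := by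
  simp only [hG, ← real_inner_self_eq_norm_sq, inner_sub_left, inner_sub_right,
    inner_add_left, inner_add_right, real_inner_smul_left, real_inner_smul_right]
  rw [real_inner_comm w0 w1, real_inner_comm wm1 w1, real_inner_comm wm2 w1,
    real_inner_comm wm1 w0, real_inner_comm wm2 w0, real_inner_comm wm2 wm1]
  ring
end

section
/- Let H be a real Hilbert space with norm ‖·‖ and let V be a subspace with a stronger norm ‖∇·‖ satisfying the Poincaré inequality ‖v‖ ≤ C_P ‖∇v‖ for all v ∈ V. Suppose a sequence (u^n) ⊂ V, ν > 0, Δt > 0, and F ≥ 0 satisfy the energy inequality ‖U_{n+1}‖_G² - ‖U_n‖_G² + (νΔt/2)‖∇u^{n+1}‖² ≤ (Δt/(2ν))·F² for all n ≥ 0, where U_n = (u^n, u^{n-1}, u^{n-2}) and ‖·‖_G is the G-norm on H³ with equivalence constant C_l (C_l‖V‖_G² ≤ ‖V‖² where ‖V‖² is the sum of component norms squared). Then with α = min{C_l ν Δt/(16 C_P²), 3/4}, for all n ≥ 0: ‖U_{n+1}‖_G² + (νΔt/4)‖∇u^{n+1}‖² + (νΔt/16)‖∇u^n‖² ≤ (1+α)^{-(n+1)}·(‖U_0‖_G²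 + (νΔt/4)‖∇u^0‖² + (νΔt/16)‖∇u^{-1}‖²) + max{8C_P²/(C_l ν²), 2Δt/(3ν)}·F². -/
theorem stmt_12 {H : Type*} [NormedAddCommGroup H] [InnerProductSpace ℝ H]
    (GnormSq : H → H → H → ℝ)
    (hG : ∀ x y z : H, GnormSq x y z =
      (1/12) * (19*‖x‖^2 + 10*‖y‖^2 + ‖z‖^2
        - 24 * inner ℝ x y + 6 * inner ℝ x z - 6 * inner ℝ y z))
    (D : H → ℝ) (hD : ∀ v, 0 ≤ D v)
    (u : ℤ → H) (ν Δt CP Cl F : ℝ)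
    (hν : 0 < ν) (hΔt : 0 < Δt) (hCP : 0 < CP) (hCl : 0 < Cl) (hF : 0 ≤ F)
    (hPoin : ∀ n : ℤ, ‖u n‖ ≤ CP * D (u n))
    (hEq : ∀ x y z : H, Cl * GnormSq x y z ≤ ‖x‖^2 + ‖y‖^2 + ‖z‖^2)
    (hEnergy : ∀ n : ℤ, 0 ≤ n →
      GnormSq (u (n+1)) (u n) (u (n-1)) - GnormSq (u n) (u (n-1)) (u (n-2))
        + ν * Δt / 2 * (D (u (n+1)))^2 ≤ Δt / (2*ν) * F^2) :
    ∀ n : ℕ,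
      GnormSq (u (n+1)) (u n) (u (n-1))
          + ν * Δt / 4 * (D (u (n+1)))^2 + ν * Δt / 16 * (D (u n))^2
        ≤ (1 + min (Cl * ν * Δt / (16 * CP^2)) (3/4))⁻¹ ^ (n + 1) *
            (GnormSq (u 0) (u (-1)) (u (-2))
              + ν * Δt / 4 * (D (u 0))^2 + ν * Δt / 16 * (D (u (-1)))^2)
          + max (8 * CP^2 / (Cl * ν^2)) (2 * Δt / (3 * ν)) * F^2 := by
  set α := min (Cl * ν * Δt / (16 * CP^2)) (3/4) with hαdef
  set M := max (8 * CP^2 / (Cl * ν^2)) (2 * Δt / (3 * ν)) with hMdef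
  set X := GnormSq (u 0) (u (-1)) (u (-2))
      + ν * Δt / 4 * (D (u 0))^2 + ν * Δt / 16 * (D (u (-1)))^2 with hXdef
  have hα0 : 0 < α := lt_min (by positivity) (by norm_num)
  have hα1 : α ≤ 3/4 := min_le_right _ _
  have h1p : (0:ℝ) < 1 + α := by linarith
  have hM0 : 0 < M := lt_of_lt_of_le (by positivity) (le_max_left _ _)
  have hαle : α * (16 * CP^2) ≤ Cl * ν * Δt := by
    have := min_le_left (Cl * ν * Δt / (16 * CP^2)) (3/4)
    rw [le_div_iff₀ (by positivity)] at this
    exact this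
  -- α * M ≥ Δt / (2ν)
  have hαM : Δt / (2*ν) ≤ α * M := by
    rcases min_cases (Cl * ν * Δt / (16 * CP^2)) (3/4) with ⟨h1, _⟩ | ⟨h1, _⟩
    · have hM1 : 8 * CP^2 / (Cl * ν^2) ≤ M := le_max_left _ _
      have : α * (8 * CP^2 / (Cl * ν^2)) = Δt / (2*ν) := by
        rw [hαdef, h1]; field_simp; ring
      calc Δt / (2*ν) = α * (8 * CP^2 / (Cl * ν^2)) := this.symm
        _ ≤ α * M := by
          apply mul_le_mul_of_nonneg_left hM1 hα0.le
    · have hM1 : 2 * Δt / (3 * ν) ≤ M := le_max_right _ _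
      have h34 : α = 3/4 := by rw [hαdef, h1]
      rw [h34]
      have : Δt / (2*ν) = (3/4) * (2 * Δt / (3 * ν)) := by field_simp; ring
      rw [this]
      apply mul_le_mul_of_nonneg_left hM1 (by norm_num)
  clear_value α M X
  -- Poincaré squared
  have hP : ∀ k : ℤ, ‖u k‖^2 ≤ CP^2 * (D (u k))^2 := by
    intro k
    have h1 := hPoin k
    have h2 := norm_nonneg (u k)
    have h3 := hD (u k)
    nlinarith
  -- key one-step inequality
  have key : ∀ n : ℤ, 0 ≤ n →
      (1 + α) * (GnormSq (u (n+1)) (u n) (u (n-1))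
          + ν * Δt / 4 * (D (u (n+1)))^2 + ν * Δt / 16 * (D (u n))^2)
        ≤ (GnormSq (u n) (u (n-1)) (u (n-2))
          + ν * Δt / 4 * (D (u n))^2 + ν * Δt / 16 * (D (u (n-1)))^2)
          + α * M * F^2 := by
    intro n hn
    have hE := hEnergy n hn
    have hG1 := hEq (u (n+1)) (u n) (u (n-1))
    have hp1 := hP (n+1)
    have hp2 := hP n
    have hp3 := hP (n-1)
    have hsum : Cl * GnormSq (u (n+1)) (u n) (u (n-1))
        ≤ CP^2 * ((D (u (n+1)))^2 + (D (u n))^2 + (D (u (n-1)))^2) := by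
      nlinarith
    have hS0 : (0:ℝ) ≤ (D (u (n+1)))^2 + (D (u n))^2 + (D (u (n-1)))^2 := by positivity
    have hG2 : GnormSq (u (n+1)) (u n) (u (n-1))
        ≤ CP^2 / Cl * ((D (u (n+1)))^2 + (D (u n))^2 + (D (u (n-1)))^2) := by
      rw [div_mul_eq_mul_div, le_div_iff₀ hCl]
      linarith [hsum]
    have hc : α * CP^2 / Cl ≤ ν * Δt / 16 := by
      rw [div_le_div_iff₀ hCl (by norm_num : (0:ℝ) < 16)]
      linarith [hαle]
    have hGb : α * GnormSq (u (n+1)) (u n) (u (n-1))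
        ≤ ν * Δt / 16 * ((D (u (n+1)))^2 + (D (u n))^2 + (D (u (n-1)))^2) :=
      calc α * GnormSq (u (n+1)) (u n) (u (n-1))
          ≤ α * (CP^2 / Cl * ((D (u (n+1)))^2 + (D (u n))^2 + (D (u (n-1)))^2)) :=
            mul_le_mul_of_nonneg_left hG2 hα0.le
        _ = (α * CP^2 / Cl) * ((D (u (n+1)))^2 + (D (u n))^2 + (D (u (n-1)))^2) := by ring
        _ ≤ ν * Δt / 16 * ((D (u (n+1)))^2 + (D (u n))^2 + (D (u (n-1)))^2) :=
            mul_le_mul_of_nonneg_right hc hS0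
    have hFM : Δt / (2*ν) * F^2 ≤ α * M * F^2 :=
      mul_le_mul_of_nonneg_right hαM (sq_nonneg F)
    have t1 : (0:ℝ) ≤ (3/4 - α) * (ν * Δt) * (D (u (n+1)))^2 :=
      mul_nonneg (mul_nonneg (by linarith) (by positivity)) (sq_nonneg _)
    have t2 : (0:ℝ) ≤ (3/4 - α) * (ν * Δt) * (D (u n))^2 :=
      mul_nonneg (mul_nonneg (by linarith) (by positivity)) (sq_nonneg _)
    have t3 : (0:ℝ) ≤ ν * Δt * (D (u n))^2 :=
      mul_nonneg (by positivity) (sq_nonneg _)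
    clear hG hEq hPoin hEnergy hD hP hp1 hp2 hp3 hsum hS0 hG2 hc hαle hαM hM0 hF hα1
    linarith [t1, t2, t3, hE, hGb, hFM]
  have hinv : (1 + α) * (1 + α)⁻¹ = 1 := mul_inv_cancel₀ h1p.ne'
  intro n
  induction n with
  | zero =>
    have hk := key 0 (le_refl 0)
    norm_num at hk ⊢
    rw [← mul_le_mul_iff_right₀ h1p]
    have hXeq : (1 + α) * ((1 + α)⁻¹ * X + M * F^2) = X + M * F^2 + α * (M * F^2) :=
      calc (1 + α) * ((1 + α)⁻¹ * X + M * F^2)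
          = ((1 + α) * (1 + α)⁻¹) * X + (1 + α) * (M * F^2) := by ring
        _ = X + M * F^2 + α * (M * F^2) := by rw [hinv]; ring
    rw [hXeq]
    have hMF : 0 ≤ M * F^2 := by positivity
    linarith
  | succ n ih =>
    have hk := key ((n : ℤ) + 1) (by positivity)
    have e1 : ((n : ℤ) + 1 - 1) = (n : ℤ) := by ring
    have e2 : ((n : ℤ) + 1 - 2) = (n : ℤ) - 1 := by ring
    rw [e1, e2] at hk
    push_cast
    rw [e1, ← mul_le_mul_iff_right₀ h1p]
    have hXeq : (1 + α) * ((1 + α)⁻¹ ^ (n + 1 + 1) * X + M * F^2)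
        = (1 + α)⁻¹ ^ (n + 1) * X + M * F^2 + α * (M * F^2) := by
      calc (1 + α) * ((1 + α)⁻¹ ^ (n + 1 + 1) * X + M * F^2)
          = ((1 + α) * (1 + α)⁻¹) * ((1 + α)⁻¹ ^ (n + 1) * X) + (1 + α) * (M * F^2) := by
            rw [pow_succ']; ring
        _ = (1 + α)⁻¹ ^ (n + 1) * X + M * F^2 + α * (M * F^2) := by rw [hinv]; ring
    rw [hXeq]
    linarith [hk, ih]
end
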